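/- Let H be a complex Hilbert space and G a bounded selfadjoint operator with canonical decomposition H = H₊ ⊕ H₋ ⊕ N(G), G = G₊ ⊕ (−G₋) ⊕ 0, where G± are positive definite on H± with ‖G₊‖ = ‖G₋‖ = 1/κ. Then the following are equivalent: (i) for every u₀ ∈ H there exist γ ∈ [−κ, κ] and y₀ ∈ H with ⟨G y₀, y₀⟩ = 0 and (I + γG) y₀ = u₀; (ii) ker(I − κG) ≠ {0} and ker(I + κG) ≠ {0}. -/

import Mathlib

set_option maxHeartbeats 1000000


open scoped InnerProductSpace
open Set Filter Topology

namespace Prop48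
variable {H : Type*} [NormedAddCommGroup H] [InnerProductSpace ℂ H] [CompleteSpace H]

noncomputable def resolv (G : H →L[ℂ] H) (u₀ : H) (γ : ℝ) : H :=
  Ring.inverse ((1 : H →L[ℂ] H) + (γ : ℂ) • G) u₀

lemma triple_zero {Hp Hm N : Submodule ℂ H}
    (hpm : ∀ x ∈ Hp, ∀ y ∈ Hm, ⟪x, y⟫_ℂ = 0)
    (hp0 : ∀ x ∈ Hp, ∀ y ∈ N, ⟪x, y⟫_ℂ = 0)
    (hm0 : ∀ x ∈ Hm, ∀ y ∈ N, ⟪x, y⟫_ℂ = 0)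
    {p m n : H} (hp : p ∈ Hp) (hm : m ∈ Hm) (hn : n ∈ N)
    (h : p + m + n = 0) : p = 0 ∧ m = 0 ∧ n = 0 := by
  have hpz : p = 0 := by
    have h1 : ⟪p, p + m + n⟫_ℂ = ⟪p, p⟫_ℂ := by
      rw [inner_add_right, inner_add_right, hpm p hp m hm, hp0 p hp n hn]; ring
    rw [h, inner_zero_right] at h1
    exact inner_self_eq_zero.mp h1.symm
  subst hpz
  have hmz : m = 0 := by
    have h1 : ⟪m, 0 + m + n⟫_ℂ = ⟪m, m⟫_ℂ := by
      rw [inner_add_right, inner_add_right, hm0 m hm n hn, inner_zero_right]; ring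
    rw [h, inner_zero_right] at h1
    exact inner_self_eq_zero.mp h1.symm
  subst hmz
  simp only [zero_add] at h
  exact ⟨rfl, rfl, h⟩

lemma triple_uniq {Hp Hm N : Submodule ℂ H}
    (hpm : ∀ x ∈ Hp, ∀ y ∈ Hm, ⟪x, y⟫_ℂ = 0)
    (hp0 : ∀ x ∈ Hp, ∀ y ∈ N, ⟪x, y⟫_ℂ = 0)
    (hm0 : ∀ x ∈ Hm, ∀ y ∈ N, ⟪x, y⟫_ℂ = 0)
    {p m n p' m' n' : H} (hp : p ∈ Hp) (hm : m ∈ Hm) (hn : n ∈ N)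
    (hp' : p' ∈ Hp) (hm' : m' ∈ Hm) (hn' : n' ∈ N)
    (h : p + m + n = p' + m' + n') : p = p' ∧ m = m' ∧ n = n' := by
  have h0 : (p - p') + (m - m') + (n - n') = 0 := by
    rw [← sub_eq_zero] at h; rw [← h]; abel
  obtain ⟨h1, h2, h3⟩ := triple_zero hpm hp0 hm0 (Hp.sub_mem hp hp')
    (Hm.sub_mem hm hm') (N.sub_mem hn hn') h0
  exact ⟨sub_eq_zero.mp h1, sub_eq_zero.mp h2, sub_eq_zero.mp h3⟩

lemma pythag3 {a b c : H} (hab : ⟪a, b⟫_ℂ = 0) (hac : ⟪a, c⟫_ℂ = 0) (hbc : ⟪b, c⟫_ℂ = 0) :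
    ‖a + b + c‖ ^ 2 = ‖a‖ ^ 2 + ‖b‖ ^ 2 + ‖c‖ ^ 2 := by
  have h1 : ⟪a + b, c⟫_ℂ = 0 := by rw [inner_add_left, hac, hbc, add_zero]
  have h2 : ‖a + b + c‖ ^ 2 = ‖a + b‖ ^ 2 + ‖c‖ ^ 2 := by
    rw [norm_add_sq (𝕜 := ℂ) (a+b) c, h1]
    simp
  have h3 : ‖a + b‖ ^ 2 = ‖a‖ ^ 2 + ‖b‖ ^ 2 := by
    rw [norm_add_sq (𝕜 := ℂ) a b, hab]
    simp
  rw [h2, h3]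


lemma cross_terms {G : H →L[ℂ] H} {Hp Hm : Submodule ℂ H}
    (hpm : ∀ x ∈ Hp, ∀ y ∈ Hm, ⟪x, y⟫_ℂ = 0)
    (hp0 : ∀ x ∈ Hp, ∀ y ∈ LinearMap.ker (G : H →ₗ[ℂ] H), ⟪x, y⟫_ℂ = 0)
    (hm0 : ∀ x ∈ Hm, ∀ y ∈ LinearMap.ker (G : H →ₗ[ℂ] H), ⟪x, y⟫_ℂ = 0)
    (hinvp : ∀ x ∈ Hp, G x ∈ Hp) (hinvm : ∀ x ∈ Hm, G x ∈ Hm)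
    {a b c : H} (ha : a ∈ Hp) (hb : b ∈ Hm) (hc : c ∈ LinearMap.ker (G : H →ₗ[ℂ] H)) :
    ⟪G (a + b + c), a + b + c⟫_ℂ = ⟪G a, a⟫_ℂ + ⟪G b, b⟫_ℂ := by
  have hc0 : G c = 0 := hc
  have h1 : ⟪G a, b⟫_ℂ = 0 := hpm _ (hinvp a ha) b hb
  have h2 : ⟪G a, c⟫_ℂ = 0 := hp0 _ (hinvp a ha) c hc
  have h3 : ⟪G b, a⟫_ℂ = 0 := by
    have : ⟪a, G b⟫_ℂ = 0 := hpm a ha _ (hinvm b hb)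
    rw [← inner_conj_symm, this, map_zero]
  have h4 : ⟪G b, c⟫_ℂ = 0 := hm0 _ (hinvm b hb) c hc
  rw [map_add, map_add, hc0, add_zero]
  rw [inner_add_left, inner_add_right, inner_add_right, inner_add_right, inner_add_right,
    h1, h2, h3, h4]
  ring

lemma re_inner_self (x : H) : (⟪x, x⟫_ℂ).re = ‖x‖ ^ 2 := by
  rw [inner_self_eq_norm_sq_to_K (𝕜 := ℂ), pow_two, Complex.mul_re]
  simp [pow_two]

lemma re_le_norm_mul (x y : H) : (⟪x, y⟫_ℂ).re ≤ ‖x‖ * ‖y‖ :=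
  (Complex.re_le_norm _).trans (by exact norm_inner_le_norm x y)

lemma neg_norm_mul_le_re (x y : H) : -(‖x‖ * ‖y‖) ≤ (⟪x, y⟫_ℂ).re := by
  have := re_le_norm_mul (-x) y
  simp only [inner_neg_left, Complex.neg_re, norm_neg] at this
  linarith


lemma isUnit_T {G : H →L[ℂ] H} {κ : ℝ} (hκ : 0 < κ) (hGn : ‖G‖ ≤ 1/κ) {γ : ℝ}
    (hγ : |γ| < κ) : IsUnit ((1 : H →L[ℂ] H) + (γ : ℂ) • G) := by
  have h : ‖-((γ:ℂ) • G)‖ < 1 := by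
    rw [norm_neg, norm_smul, Complex.norm_real, Real.norm_eq_abs]
    calc |γ| * ‖G‖ ≤ |γ| * (1/κ) := mul_le_mul_of_nonneg_left hGn (abs_nonneg _)
      _ < κ * (1/κ) := mul_lt_mul_of_pos_right hγ (by positivity)
      _ = 1 := by field_simp
  have := (Units.oneSub _ h).isUnit
  simpa [Units.oneSub] using this

lemma opnorm_le {G : H →L[ℂ] H} {κ : ℝ} (hκ : 0 < κ) (hGn : ∀ x : H, ‖G x‖ ≤ ‖x‖ / κ) :
    ‖G‖ ≤ 1/κ := by
  refine ContinuousLinearMap.opNorm_le_bound _ (by positivity) (fun x => ?_)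
  rw [one_div, inv_mul_eq_div]
  exact (hGn x).trans (by rw [div_le_div_iff₀ hκ hκ])

lemma resolv_sol {G : H →L[ℂ] H} {κ : ℝ} (hκ : 0 < κ) (hGn : ‖G‖ ≤ 1/κ) (u₀ : H) {γ : ℝ}
    (hγ : |γ| < κ) :
    resolv G u₀ γ + (γ : ℂ) • G (resolv G u₀ γ) = u₀ := by
  have h := Ring.mul_inverse_cancel _ (isUnit_T hκ hGn hγ)
  have h2 := congrArg (fun A : H →L[ℂ] H => A u₀) h
  simpa [ContinuousLinearMap.mul_apply, resolv, ContinuousLinearMap.add_apply,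
    ContinuousLinearMap.smul_apply] using h2

lemma le_of_sq_le_mul {x C : ℝ} (hx : 0 ≤ x) (hC : 0 ≤ C) (h : x^2 ≤ C * x) : x ≤ C := by
  rcases eq_or_lt_of_le hx with h0 | h0
  · rw [← h0]; exact hC
  · nlinarith

lemma resolv_uniq {G : H →L[ℂ] H} {κ : ℝ} (hκ : 0 < κ) (hGn : ‖G‖ ≤ 1/κ) {u₀ : H} {γ : ℝ}
    (hγ : |γ| < κ) {y : H} (hy : y + (γ : ℂ) • G y = u₀) :
    y = resolv G u₀ γ := by
  have h2 : resolv G u₀ γ + (γ:ℂ) • G (resolv G u₀ γ) = u₀ := resolv_sol hκ hGn u₀ hγ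
  obtain ⟨v, hv⟩ := isUnit_T hκ hGn hγ
  have : ∀ z : H, (v : H →L[ℂ] H) z = z + (γ:ℂ) • G z := by
    intro z; rw [hv]; simp
  have h3 : (v : H →L[ℂ] H) y = (v : H →L[ℂ] H) (resolv G u₀ γ) := by
    rw [this, this, hy, h2]
  have h4 := congrArg (fun z => ((v⁻¹ : (H →L[ℂ] H)ˣ) : H →L[ℂ] H) z) h3
  simpa [← ContinuousLinearMap.mul_apply, ← Units.val_mul] using h4

lemma resolv_contAt {G : H →L[ℂ] H} {κ : ℝ} (hκ : 0 < κ) (hGn : ‖G‖ ≤ 1/κ) (u₀ : H) {γ : ℝ}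
    (hγ : |γ| < κ) : ContinuousAt (resolv G u₀) γ := by
  obtain ⟨v, hv⟩ := isUnit_T hκ hGn hγ
  have hc1 : ContinuousAt (fun t : ℝ => (1 : H →L[ℂ] H) + (t : ℂ) • G) γ := by
    fun_prop
  have hc2 : ContinuousAt (Ring.inverse : (H →L[ℂ] H) → _) ((1 : H →L[ℂ] H) + (γ:ℂ) • G) := by
    rw [← hv]; exact NormedRing.inverse_continuousAt v
  have hc3 : ContinuousAt (fun t : ℝ => Ring.inverse ((1 : H →L[ℂ] H) + (t : ℂ) • G)) γ :=
    ContinuousAt.comp (g := (Ring.inverse : (H →L[ℂ] H) → _)) hc2 hc1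
  exact (ContinuousLinearMap.apply ℂ H u₀).continuous.continuousAt.comp hc3


lemma boundary (G : H →L[ℂ] H) (hsym : ∀ x y : H, ⟪G x, y⟫_ℂ = ⟪x, G y⟫_ℂ)
    (κ : ℝ) (hκ : 0 < κ)
    (Hp Hm : Submodule ℂ H)
    (hpm : ∀ x ∈ Hp, ∀ y ∈ Hm, ⟪x, y⟫_ℂ = 0)
    (hp0 : ∀ x ∈ Hp, ∀ y ∈ LinearMap.ker (G : H →ₗ[ℂ] H), ⟪x, y⟫_ℂ = 0)
    (hm0 : ∀ x ∈ Hm, ∀ y ∈ LinearMap.ker (G : H →ₗ[ℂ] H), ⟪x, y⟫_ℂ = 0)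
    (hspan : ∀ x : H, ∃ xp ∈ Hp, ∃ xm ∈ Hm, ∃ x0 ∈ LinearMap.ker (G : H →ₗ[ℂ] H), x = xp + xm + x0)
    (hinvp : ∀ x ∈ Hp, G x ∈ Hp) (hinvm : ∀ x ∈ Hm, G x ∈ Hm)
    {α : ℝ} (hα : 0 < α) (hposp : ∀ x ∈ Hp, α * ‖x‖ ^ 2 ≤ (⟪G x, x⟫_ℂ).re)
    {β : ℝ} (hβ : 0 < β) (hnegm : ∀ x ∈ Hm, (⟪G x, x⟫_ℂ).re ≤ -(β * ‖x‖ ^ 2))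
    (hGnorm : ∀ x : H, ‖G x‖ ≤ ‖x‖ / κ)
    (e : H) (heG : G e = (-(κ:ℂ)⁻¹) • e)
    (he : e ≠ 0) (u₀ : H)
    (hf : ∀ γ ∈ Set.Ioo (0:ℝ) κ, ∀ y : H, y + (γ:ℂ) • G y = u₀ →
      0 < (⟪G y, y⟫_ℂ).re) :
    ∃ y : H, ⟪G y, y⟫_ℂ = 0 ∧ y + (κ:ℂ) • G y = u₀ := by
  have hGop : ‖G‖ ≤ 1/κ := opnorm_le hκ hGnorm
  have hreal : ∀ x : H, ⟪G x, x⟫_ℂ = ((⟪G x, x⟫_ℂ).re : ℂ) := by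
    intro x
    have h : (starRingEnd ℂ) ⟪G x, x⟫_ℂ = ⟪G x, x⟫_ℂ := by
      rw [inner_conj_symm, hsym]
    rw [Complex.conj_eq_iff_re.mp h]
  obtain ⟨up, hup, um, hum, un, hun, hu0⟩ := hspan u₀
  choose p hp m hm n hn hy using fun γ : ℝ => hspan (resolv G u₀ γ)
  -- component equations
  have hTn : ∀ γ ∈ Set.Ioo (0:ℝ) κ,
      (p γ + (γ:ℂ) • G (p γ) = up) ∧ (m γ + (γ:ℂ) • G (m γ) = um) ∧ n γ = un := by
    intro γ hγ
    have habs : |γ| < κ := by rw [abs_of_pos hγ.1]; exact hγ.2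
    have hsol := resolv_sol hκ hGop u₀ habs
    rw [hy γ] at hsol
    have hGn0 : G (n γ) = 0 := hn γ
    have heq : (p γ + (γ:ℂ) • G (p γ)) + (m γ + (γ:ℂ) • G (m γ)) + n γ
        = up + um + un := by
      rw [hu0] at hsol
      rw [← hsol, map_add, map_add, hGn0]
      module
    have h3 := triple_uniq hpm hp0 hm0
      (Hp.add_mem (hp γ) (Hp.smul_mem _ (hinvp _ (hp γ))))
      (Hm.add_mem (hm γ) (Hm.smul_mem _ (hinvm _ (hm γ))))
      (hn γ) hup hum hun heq
    exact h3
  have hTp : ∀ γ ∈ Set.Ioo (0:ℝ) κ, p γ + (γ:ℂ) • G (p γ) = up :=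
    fun γ hγ => (hTn γ hγ).1
  have hTm : ∀ γ ∈ Set.Ioo (0:ℝ) κ, m γ + (γ:ℂ) • G (m γ) = um :=
    fun γ hγ => (hTn γ hγ).2.1
  -- bound on p
  have hpb : ∀ γ ∈ Set.Ioo (0:ℝ) κ, ‖p γ‖ ≤ ‖up‖ := by
    intro γ hγ
    have h1 : ‖p γ‖^2 ≤ (⟪up, p γ⟫_ℂ).re := by
      rw [← hTp γ hγ, inner_add_left, inner_smul_left]
      have hpos : 0 ≤ (⟪G (p γ), p γ⟫_ℂ).re :=
        le_trans (by positivity) (hposp _ (hp γ))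
      have h3 : ((starRingEnd ℂ) (γ:ℂ) * ⟪G (p γ), p γ⟫_ℂ).re
          = γ * (⟪G (p γ), p γ⟫_ℂ).re := by
        rw [Complex.conj_ofReal, Complex.re_ofReal_mul]
      rw [Complex.add_re, h3, re_inner_self]
      nlinarith [hγ.1]
    have h2 : (⟪up, p γ⟫_ℂ).re ≤ ‖up‖ * ‖p γ‖ := re_le_norm_mul up (p γ)
    nlinarith [norm_nonneg (p γ), norm_nonneg up]
  have hGpb : ∀ γ ∈ Set.Ioo (0:ℝ) κ, ‖G (p γ)‖ ≤ ‖up‖ / κ := by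
    intro γ hγ
    calc ‖G (p γ)‖ ≤ ‖p γ‖ / κ := hGnorm _
      _ ≤ ‖up‖ / κ := by gcongr; exact hpb γ hγ
  -- difference equation
  have hdiff : ∀ (x : ℝ → H) (w : H), (∀ γ ∈ Set.Ioo (0:ℝ) κ, x γ + (γ:ℂ) • G (x γ) = w) →
      ∀ γ ∈ Set.Ioo (0:ℝ) κ, ∀ γ' ∈ Set.Ioo (0:ℝ) κ,
      (x γ' - x γ) + (γ':ℂ) • G (x γ' - x γ) = ((γ:ℂ) - (γ':ℂ)) • G (x γ) := by
    intro x w hx γ hγ γ' hγ'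
    have h1 := hx γ hγ
    have h2 := hx γ' hγ'
    rw [← h1] at h2
    rw [map_sub]
    linear_combination (norm := module) h2
  -- Lipschitz estimate for p
  have hplip : ∀ γ ∈ Set.Ioo (0:ℝ) κ, ∀ γ' ∈ Set.Ioo (0:ℝ) κ,
      ‖p γ' - p γ‖ ≤ |γ' - γ| * (‖up‖ / κ) := by
    intro γ hγ γ' hγ'
    set D := p γ' - p γ with hDdef
    have hDp : D ∈ Hp := Hp.sub_mem (hp γ') (hp γ)
    have heq := hdiff p up hTp γ hγ γ' hγ'
    have h1 : ‖D‖^2 ≤ (⟪D + (γ':ℂ) • G D, D⟫_ℂ).re := by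
      rw [inner_add_left, inner_smul_left, Complex.add_re, Complex.conj_ofReal,
        Complex.re_ofReal_mul, re_inner_self]
      have hpos : 0 ≤ (⟪G D, D⟫_ℂ).re := le_trans (by positivity) (hposp _ hDp)
      nlinarith [hγ'.1]
    rw [heq] at h1
    have h2 : (⟪((γ:ℂ) - (γ':ℂ)) • G (p γ), D⟫_ℂ).re ≤ (|γ' - γ| * (‖up‖ / κ)) * ‖D‖ := by
      calc (⟪((γ:ℂ) - (γ':ℂ)) • G (p γ), D⟫_ℂ).re
          ≤ ‖((γ:ℂ) - (γ':ℂ)) • G (p γ)‖ * ‖D‖ := re_le_norm_mul _ _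
        _ = |γ - γ'| * ‖G (p γ)‖ * ‖D‖ := by
            rw [show ((γ:ℂ) - (γ':ℂ)) = ((γ - γ' : ℝ) : ℂ) by push_cast; ring]
            rw [norm_smul, Complex.norm_real, Real.norm_eq_abs]
        _ ≤ |γ' - γ| * (‖up‖ / κ) * ‖D‖ := by
            rw [abs_sub_comm]
            gcongr
            exact hGpb γ hγ
    exact le_of_sq_le_mul (norm_nonneg D) (by positivity) (h1.trans h2)
  -- energy functional on Hm
  set q : H → ℝ := fun x => -(⟪G x, x⟫_ℂ).re with hqdef
  have hqexp : ∀ x d : H, q (x + d) = q x + q d + 2 * (-(⟪G x, d⟫_ℂ).re) := by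
    intro x d
    have hsw : (⟪G d, x⟫_ℂ).re = (⟪G x, d⟫_ℂ).re := by
      rw [hsym d x, ← inner_conj_symm]
      exact Complex.conj_re _
    have hexp : ⟪G (x + d), x + d⟫_ℂ
        = ⟪G x, x⟫_ℂ + ⟪G x, d⟫_ℂ + ⟪G d, x⟫_ℂ + ⟪G d, d⟫_ℂ := by
      rw [map_add, inner_add_left, inner_add_right, inner_add_right]
      ring
    simp only [hqdef]
    rw [hexp, Complex.add_re, Complex.add_re, Complex.add_re, hsw]
    ring
  have hqm : ∀ x ∈ Hm, β * ‖x‖^2 ≤ q x := by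
    intro x hx
    have := hnegm x hx
    simp only [hqdef]
    linarith
  -- monotonicity of energy along γ with quantitative gap
  have hmen : ∀ γ ∈ Set.Ioo (0:ℝ) κ, ∀ γ' ∈ Set.Ioo (0:ℝ) κ, γ ≤ γ' →
      q (m γ) + β * ‖m γ' - m γ‖^2 ≤ q (m γ') := by
    intro γ hγ γ' hγ' hle
    set D := m γ' - m γ with hDdef
    have hDm : D ∈ Hm := Hm.sub_mem (hm γ') (hm γ)
    have heq := hdiff m um hTm γ hγ γ' hγ'
    have hkey : 0 ≤ -(⟪G (m γ), D⟫_ℂ).re := by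
      rcases eq_or_lt_of_le hle with heq' | hlt
      · have : D = 0 := by rw [hDdef, heq']; simp
        rw [this, inner_zero_right]
        simp
      · have h1 : (⟪((γ:ℂ) - (γ':ℂ)) • G (m γ), D⟫_ℂ).re
            = (γ - γ') * (⟪G (m γ), D⟫_ℂ).re := by
          rw [show ((γ:ℂ) - (γ':ℂ)) = ((γ - γ' : ℝ) : ℂ) by push_cast; ring]
          rw [inner_smul_left, Complex.conj_ofReal, Complex.re_ofReal_mul]
        have h2 : (⟪D + (γ':ℂ) • G D, D⟫_ℂ).re = ‖D‖^2 + γ' * (⟪G D, D⟫_ℂ).re := by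
          rw [inner_add_left, inner_smul_left, Complex.add_re, Complex.conj_ofReal,
            Complex.re_ofReal_mul, re_inner_self]
        have hb : -(‖D‖^2 / κ) ≤ (⟪G D, D⟫_ℂ).re := by
          have h3 := neg_norm_mul_le_re (G D) D
          have h4 : ‖G D‖ * ‖D‖ ≤ (‖D‖ / κ) * ‖D‖ :=
            mul_le_mul_of_nonneg_right (hGnorm D) (norm_nonneg D)
          have h5 : (‖D‖ / κ) * ‖D‖ = ‖D‖^2 / κ := by ring
          linarith
        have h3 : 0 ≤ ‖D‖^2 + γ' * (⟪G D, D⟫_ℂ).re := by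
          have h6 : γ' * (⟪G D, D⟫_ℂ).re ≥ γ' * (-(‖D‖^2 / κ)) :=
            mul_le_mul_of_nonneg_left hb (le_of_lt hγ'.1)
          have h7 : γ' * (‖D‖^2 / κ) ≤ ‖D‖^2 := by
            rw [mul_div_assoc']
            rw [div_le_iff₀ hκ]
            nlinarith [sq_nonneg ‖D‖, hγ'.2, norm_nonneg D]
          linarith
        rw [← heq, h2] at h1
        -- h1 : ‖D‖^2 + γ' * re⟪GD,D⟫ = (γ - γ') * re⟪G (m γ), D⟫
        nlinarith [h3, hlt]
    have hexp2 := hqexp (m γ) D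
    have hmm : m γ + D = m γ' := by rw [hDdef]; abel
    rw [hmm] at hexp2
    have hqD := hqm D hDm
    linarith
  -- upper bound for the energy of m γ
  have hmb : ∀ γ ∈ Set.Ioo (0:ℝ) κ, q (m γ) ≤ ‖up‖^2 / κ := by
    intro γ hγ
    have habs : |γ| < κ := by rw [abs_of_pos hγ.1]; exact hγ.2
    have hsol := resolv_sol hκ hGop u₀ habs
    have hfγ := hf γ hγ _ hsol
    rw [hy γ] at hfγ
    rw [cross_terms hpm hp0 hm0 hinvp hinvm (hp γ) (hm γ) (hn γ)] at hfγ
    have h2 : (⟪G (p γ), p γ⟫_ℂ).re ≤ ‖up‖^2 / κ := by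
      calc (⟪G (p γ), p γ⟫_ℂ).re ≤ ‖G (p γ)‖ * ‖p γ‖ := re_le_norm_mul _ _
        _ ≤ (‖up‖ / κ) * ‖up‖ :=
            mul_le_mul (hGpb γ hγ) (hpb γ hγ) (norm_nonneg _) (by positivity)
        _ = ‖up‖^2 / κ := by ring
    rw [Complex.add_re] at hfγ
    simp only [hqdef]
    linarith
  -- the sequence of parameters increasing to κ
  set s : ℕ → ℝ := fun k => κ - κ / (k + 2) with hsdef
  have hsm : ∀ k, s k ∈ Set.Ioo (0:ℝ) κ := by
    intro k
    have hk2 : (1:ℝ) < (k:ℝ) + 2 := by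
      have : (0:ℝ) ≤ (k:ℝ) := Nat.cast_nonneg k
      linarith
    constructor
    · have h2 : κ / ((k:ℝ) + 2) < κ := div_lt_self hκ hk2
      simp only [hsdef]
      linarith
    · have : 0 < κ / ((k:ℝ) + 2) := by positivity
      simp only [hsdef]
      linarith
  have hsmono : Monotone s := by
    intro i j hij
    simp only [hsdef]
    have h2 : (i:ℝ) + 2 ≤ (j:ℝ) + 2 := by
      have : (i:ℝ) ≤ (j:ℝ) := Nat.cast_le.mpr hij
      linarith
    have h3 : κ / ((j:ℝ) + 2) ≤ κ / ((i:ℝ) + 2) := by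
      apply div_le_div_of_nonneg_left hκ.le (by positivity) h2
    linarith
  have hst : Tendsto s atTop (𝓝 κ) := by
    have h1 : Tendsto (fun k : ℕ => κ / ((k:ℝ) + 2)) atTop (𝓝 0) := by
      apply Tendsto.div_atTop (tendsto_const_nhds (x := κ))
      exact Filter.tendsto_atTop_add_const_right atTop 2 tendsto_natCast_atTop_atTop
    have h2 := (tendsto_const_nhds (x := κ)).sub h1
    simpa using h2
  -- Cauchy sequence for p
  have hpc : CauchySeq (fun k => p (s k)) := by
    apply cauchySeq_of_le_tendsto_0 (fun N => (κ - s N) * (‖up‖ / κ))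
    · intro i j N hiN hjN
      have key : ∀ a b : ℕ, N ≤ a → a ≤ b → dist (p (s a)) (p (s b)) ≤ (κ - s N) * (‖up‖ / κ) := by
        intro a b hNa hab
        rw [dist_eq_norm, ← norm_neg, neg_sub]
        calc ‖p (s b) - p (s a)‖ ≤ |s b - s a| * (‖up‖ / κ) :=
              hplip (s a) (hsm a) (s b) (hsm b)
          _ ≤ (κ - s N) * (‖up‖ / κ) := by
              gcongr
              rw [abs_of_nonneg (by linarith [hsmono hab] : (0:ℝ) ≤ s b - s a)]
              have h4 := hsmono (hNa.trans hab)
              have h5 := (hsm b).2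
              have h6 := hsmono hNa
              linarith
      rcases le_total i j with h | h
      · exact key i j hiN h
      · rw [dist_comm]; exact key j i hjN h
    · have h2 := (tendsto_const_nhds (x := κ)).sub hst
      have h3 : Tendsto (fun N => κ - s N) atTop (𝓝 0) := by simpa using h2
      have := h3.mul_const (‖up‖ / κ)
      simpa using this
  -- Cauchy sequence for m via monotone bounded energy
  have hmc : CauchySeq (fun k => m (s k)) := by
    set qk : ℕ → ℝ := fun k => q (m (s k)) with hqk
    have hqmono : Monotone qk := by
      intro i j hij
      have h1 := hmen (s i) (hsm i) (s j) (hsm j) (hsmono hij)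
      have h2 : 0 ≤ β * ‖m (s j) - m (s i)‖^2 := by positivity
      simp only [hqk]
      linarith
    have hbdd : BddAbove (Set.range qk) := by
      refine ⟨‖up‖^2 / κ, ?_⟩
      rintro x ⟨k, rfl⟩
      exact hmb _ (hsm k)
    set Q := ⨆ k, qk k with hQ
    have hqQ : Tendsto qk atTop (𝓝 Q) := tendsto_atTop_ciSup hqmono hbdd
    have hqle : ∀ k, qk k ≤ Q := fun k => le_ciSup hbdd k
    apply cauchySeq_of_le_tendsto_0 (fun N => Real.sqrt ((Q - qk N) / β))
    · intro i j N hiN hjN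
      have key : ∀ a b : ℕ, N ≤ a → a ≤ b →
          dist (m (s a)) (m (s b)) ≤ Real.sqrt ((Q - qk N) / β) := by
        intro a b hNa hab
        rw [dist_eq_norm, ← norm_neg, neg_sub]
        have h1 := hmen (s a) (hsm a) (s b) (hsm b) (hsmono hab)
        have h2 : ‖m (s b) - m (s a)‖^2 ≤ (Q - qk N) / β := by
          rw [le_div_iff₀ hβ]
          have h3 := hqle b
          have h4 := hqmono hNa
          simp only [hqk] at h3 h4 ⊢
          nlinarith
        calc ‖m (s b) - m (s a)‖ = Real.sqrt (‖m (s b) - m (s a)‖^2) := by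
              rw [Real.sqrt_sq (norm_nonneg _)]
          _ ≤ Real.sqrt ((Q - qk N) / β) := Real.sqrt_le_sqrt h2
      rcases le_total i j with h | h
      · exact key i j hiN h
      · rw [dist_comm]; exact key j i hjN h
    · have h1 : Tendsto (fun N => (Q - qk N) / β) atTop (𝓝 0) := by
        have := ((tendsto_const_nhds (x := Q)).sub hqQ).div_const β
        simpa using this
      have h2 := (Real.continuous_sqrt.tendsto 0).comp h1
      simpa [Function.comp_def] using h2
  obtain ⟨pstar, hps⟩ := cauchySeq_tendsto_of_complete hpc
  obtain ⟨mstar, hms⟩ := cauchySeq_tendsto_of_complete hmc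
  have hcast : Tendsto (fun k => ((s k : ℝ) : ℂ)) atTop (𝓝 ((κ:ℝ) : ℂ)) :=
    (Complex.continuous_ofReal.tendsto κ).comp hst
  have hplim : pstar + (κ:ℂ) • G pstar = up := by
    have h1 : Tendsto (fun k => p (s k) + ((s k : ℝ) : ℂ) • G (p (s k))) atTop
        (𝓝 (pstar + (κ:ℂ) • G pstar)) :=
      hps.add (hcast.smul ((G.continuous.tendsto pstar).comp hps))
    have h2 : (fun k => p (s k) + ((s k : ℝ) : ℂ) • G (p (s k))) = fun _ => up :=
      funext fun k => hTp _ (hsm k)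
    rw [h2] at h1
    exact tendsto_nhds_unique h1 tendsto_const_nhds
  have hmlim : mstar + (κ:ℂ) • G mstar = um := by
    have h1 : Tendsto (fun k => m (s k) + ((s k : ℝ) : ℂ) • G (m (s k))) atTop
        (𝓝 (mstar + (κ:ℂ) • G mstar)) :=
      hms.add (hcast.smul ((G.continuous.tendsto mstar).comp hms))
    have h2 : (fun k => m (s k) + ((s k : ℝ) : ℂ) • G (m (s k))) = fun _ => um :=
      funext fun k => hTm _ (hsm k)
    rw [h2] at h1
    exact tendsto_nhds_unique h1 tendsto_const_nhds
  set ystar := pstar + mstar + un with hystar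
  have hGun : G un = 0 := hun
  have hsolstar : ystar + (κ:ℂ) • G ystar = u₀ := by
    have h1 : ystar + (κ:ℂ) • G ystar
        = (pstar + (κ:ℂ) • G pstar) + (mstar + (κ:ℂ) • G mstar) + un := by
      simp only [hystar, map_add, hGun]
      module
    rw [h1, hplim, hmlim, ← hu0]
  have hyst : Tendsto (fun k => resolv G u₀ (s k)) atTop (𝓝 ystar) := by
    have h1 : (fun k => resolv G u₀ (s k)) = fun k => p (s k) + m (s k) + un := by
      funext k
      rw [hy, (hTn _ (hsm k)).2.2]
    rw [h1, hystar]
    exact (hps.add hms).add tendsto_const_nhds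
  have hc0 : 0 ≤ (⟪G ystar, ystar⟫_ℂ).re := by
    have hG2 : Tendsto (fun k => G (resolv G u₀ (s k))) atTop (𝓝 (G ystar)) :=
      (G.continuous.tendsto _).comp hyst
    have hcont : Tendsto (fun k => (⟪G (resolv G u₀ (s k)), resolv G u₀ (s k)⟫_ℂ).re)
        atTop (𝓝 (⟪G ystar, ystar⟫_ℂ).re) :=
      (Complex.continuous_re.tendsto _).comp (hG2.inner hyst)
    refine ge_of_tendsto hcont (Filter.Eventually.of_forall fun k => ?_)
    have habs : |s k| < κ := by rw [abs_of_pos (hsm k).1]; exact (hsm k).2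
    exact (hf _ (hsm k) _ (resolv_sol hκ hGop u₀ habs)).le
  -- the quadratic correction along e
  set c₀ := (⟪G ystar, ystar⟫_ℂ).re with hc₀def
  set r := (⟪G ystar, e⟫_ℂ).re with hrdef
  have hen : (0:ℝ) < ‖e‖^2 := by
    have : ‖e‖ ≠ 0 := norm_ne_zero_iff.mpr he
    positivity
  set a := ‖e‖^2 / κ with hadef
  have ha : 0 < a := div_pos hen hκ
  set S := Real.sqrt (r^2 + a * c₀) with hSdef
  have hS : S^2 = r^2 + a * c₀ := Real.sq_sqrt (by nlinarith)
  have hSnn : 0 ≤ S := Real.sqrt_nonneg _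
  set t := (r + S) / a with htdef
  have hat : a * t = r + S := by
    rw [htdef]
    field_simp
  have hroot : c₀ + 2 * (t * r) - t^2 * a = 0 := by nlinarith [hat, hS, ha]
  have hGee : (⟪G e, e⟫_ℂ).re = -a := by
    rw [heG, show (-(κ:ℂ)⁻¹) = ((-κ⁻¹ : ℝ) : ℂ) by push_cast; ring, inner_smul_left,
      Complex.conj_ofReal, Complex.re_ofReal_mul, re_inner_self, hadef]
    field_simp
  have hconj : (⟪G e, ystar⟫_ℂ).re = r := by
    rw [hsym e ystar, ← inner_conj_symm]
    exact Complex.conj_re _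
  refine ⟨ystar + (t:ℂ) • e, ?_, ?_⟩
  · have hexp : ⟪G (ystar + (t:ℂ) • e), ystar + (t:ℂ) • e⟫_ℂ
        = ⟪G ystar, ystar⟫_ℂ + (t:ℂ) * ⟪G ystar, e⟫_ℂ + (t:ℂ) * ⟪G e, ystar⟫_ℂ
          + (t:ℂ)^2 * ⟪G e, e⟫_ℂ := by
      simp only [map_add, map_smul, inner_add_left, inner_add_right, inner_smul_left,
        inner_smul_right, Complex.conj_ofReal]
      ring
    have hre : (⟪G (ystar + (t:ℂ) • e), ystar + (t:ℂ) • e⟫_ℂ).re = 0 := by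
      rw [hexp, Complex.add_re, Complex.add_re, Complex.add_re, Complex.re_ofReal_mul,
        Complex.re_ofReal_mul, show ((t:ℂ))^2 = ((t^2 : ℝ) : ℂ) by push_cast; ring,
        Complex.re_ofReal_mul, hconj, hGee, ← hrdef, ← hc₀def]
      nlinarith [hroot]
    rw [hreal, hre]
    simp
  · have h1 : (ystar + (t:ℂ) • e) + (κ:ℂ) • G (ystar + (t:ℂ) • e)
        = (ystar + (κ:ℂ) • G ystar) + (t:ℂ) • (e + (κ:ℂ) • G e) := by
      rw [map_add, map_smul]
      module
    have he2 : e + (κ:ℂ) • G e = 0 := by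
      have hκc : (κ:ℂ) ≠ 0 := by
        exact_mod_cast hκ.ne'
      rw [heG, neg_smul, smul_neg, smul_smul, mul_inv_cancel₀ hκc]
      simp
    rw [h1, hsolstar, he2, smul_zero, add_zero]

lemma forward_kernel (G : H →L[ℂ] H) (hsym : ∀ x y : H, ⟪G x, y⟫_ℂ = ⟪x, G y⟫_ℂ)
    (κ : ℝ) (hκ : 0 < κ)
    (Hp Hm : Submodule ℂ H)
    (hpm : ∀ x ∈ Hp, ∀ y ∈ Hm, ⟪x, y⟫_ℂ = 0)
    (hp0 : ∀ x ∈ Hp, ∀ y ∈ LinearMap.ker (G : H →ₗ[ℂ] H), ⟪x, y⟫_ℂ = 0)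
    (hm0 : ∀ x ∈ Hm, ∀ y ∈ LinearMap.ker (G : H →ₗ[ℂ] H), ⟪x, y⟫_ℂ = 0)
    (hspan : ∀ x : H, ∃ xp ∈ Hp, ∃ xm ∈ Hm, ∃ x0 ∈ LinearMap.ker (G : H →ₗ[ℂ] H), x = xp + xm + x0)
    (hinvp : ∀ x ∈ Hp, G x ∈ Hp) (hinvm : ∀ x ∈ Hm, G x ∈ Hm)
    {α : ℝ} (hα : 0 < α) (hposp : ∀ x ∈ Hp, α * ‖x‖ ^ 2 ≤ (⟪G x, x⟫_ℂ).re)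
    {β : ℝ} (hβ : 0 < β) (hnegm : ∀ x ∈ Hm, (⟪G x, x⟫_ℂ).re ≤ -(β * ‖x‖ ^ 2))
    (hGmnorm : ∀ x ∈ Hm, ‖G x‖ ≤ ‖x‖ / κ)
    (u₀ : H) (hu₀p : u₀ ∈ Hp) (hu₀ : u₀ ≠ 0)
    {γ : ℝ} (hγ : γ ∈ Set.Icc (-κ) κ) {y₀ : H}
    (hQ : (⟪G y₀, y₀⟫_ℂ).re = 0) (hsol : y₀ + (γ:ℂ) • G y₀ = u₀) :
    ∃ v : H, v ≠ 0 ∧ v + (κ:ℂ) • G v = 0 := by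
  obtain ⟨p, hp, m, hm, n, hn, hy⟩ := hspan y₀
  have hGn0 : G n = 0 := hn
  have heq : (p + (γ:ℂ) • G p) + (m + (γ:ℂ) • G m) + n = u₀ + 0 + 0 := by
    rw [add_zero, add_zero, ← hsol, hy, map_add, map_add, hGn0]
    module
  obtain ⟨hTp, hTm, hn0⟩ := triple_uniq hpm hp0 hm0
    (Hp.add_mem hp (Hp.smul_mem _ (hinvp _ hp)))
    (Hm.add_mem hm (Hm.smul_mem _ (hinvm _ hm)))
    hn hu₀p Hm.zero_mem (LinearMap.ker (G : H →ₗ[ℂ] H)).zero_mem heq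
  rw [hy, cross_terms hpm hp0 hm0 hinvp hinvm hp hm hn, Complex.add_re] at hQ
  by_cases hmz : m = 0
  · exfalso
    rw [hmz, inner_zero_right, Complex.zero_re] at hQ
    have h1 : α * ‖p‖^2 ≤ 0 := by linarith [hposp p hp]
    have h2 : p = 0 := by
      have := sq_nonneg ‖p‖
      have hn2 : ‖p‖^2 = 0 := by nlinarith
      have : ‖p‖ = 0 := by nlinarith
      exact norm_eq_zero.mp this
    rw [h2] at hTp
    simp at hTp
    exact hu₀ hTp.symm
  · have hmn : 0 < ‖m‖ := norm_pos_iff.mpr hmz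
    have hTmre : ‖m‖^2 + γ * (⟪G m, m⟫_ℂ).re = 0 := by
      have h1 : (⟪m + (γ:ℂ) • G m, m⟫_ℂ).re = 0 := by
        rw [hTm, inner_zero_left, Complex.zero_re]
      rw [inner_add_left, inner_smul_left, Complex.add_re, Complex.conj_ofReal,
        Complex.re_ofReal_mul, re_inner_self] at h1
      exact h1
    have hGmm := hnegm m hm
    have hγpos : 0 < γ := by
      by_contra hc
      push_neg at hc
      have hre : (⟪G m, m⟫_ℂ).re < 0 := by nlinarith [mul_pos hβ (pow_pos hmn 2)]
      nlinarith [mul_nonneg (neg_nonneg.mpr hc) (neg_nonneg.mpr hre.le)]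
    have hmeq : m = -((γ:ℂ) • G m) := by
      rw [eq_neg_iff_add_eq_zero]
      exact hTm
    have hnormeq : ‖m‖ ≤ γ * (‖m‖ / κ) := by
      have hne : ‖m‖ = ‖(γ:ℂ) • G m‖ := by
        have := congrArg norm hmeq
        rwa [norm_neg] at this
      calc ‖m‖ = ‖(γ:ℂ) • G m‖ := hne
        _ = γ * ‖G m‖ := by
            rw [norm_smul, Complex.norm_real, Real.norm_eq_abs, abs_of_pos hγpos]
        _ ≤ γ * (‖m‖ / κ) := mul_le_mul_of_nonneg_left (hGmnorm m hm) hγpos.le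
    have hγκ : γ = κ := by
      have h2 : κ ≤ γ := by
        rw [mul_div_assoc', le_div_iff₀ hκ] at hnormeq
        nlinarith
      linarith [hγ.2]
    exact ⟨m, hmz, by rw [← hγκ]; exact hTm⟩

lemma lub_nonempty {S : Set ℝ} {c : ℝ} (h : IsLUB S c) : S.Nonempty := by
  by_contra hS
  rw [Set.not_nonempty_iff_eq_empty] at hS
  have h1 : c - 1 ∈ upperBounds S := by
    rw [hS]
    intro x hx
    exact absurd hx (Set.notMem_empty x)
  linarith [h.2 h1]

end Prop48

open Prop48

/-- Proposition 4.8: with the canonical decomposition `H = H₊ ⊕ H₋ ⊕ N(G)` of a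
selfadjoint operator `G` (positive definite on `H₊`, negative definite on `H₋`, with
`‖G₊‖ = ‖G₋‖ = 1/κ`), the normal equation `(I + γG)y₀ = u₀` has a solution `y₀ ∈ Q(G)`
with `γ ∈ [-κ, κ]` for every `u₀ ∈ H` iff `ker(I - κG) ≠ {0}` and `ker(I + κG) ≠ {0}`. -/
theorem solvable_for_all_iff_boundary_kernels
    {H : Type*} [NormedAddCommGroup H] [InnerProductSpace ℂ H] [CompleteSpace H]
    (G : H →L[ℂ] H) (hG : IsSelfAdjoint G) (κ : ℝ) (hκ : 0 < κ)
    (Hp Hm : Submodule ℂ H)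
    (hpm : ∀ x ∈ Hp, ∀ y ∈ Hm, ⟪x, y⟫_ℂ = 0)
    (hp0 : ∀ x ∈ Hp, ∀ y ∈ LinearMap.ker (G : H →ₗ[ℂ] H), ⟪x, y⟫_ℂ = 0)
    (hm0 : ∀ x ∈ Hm, ∀ y ∈ LinearMap.ker (G : H →ₗ[ℂ] H), ⟪x, y⟫_ℂ = 0)
    (hspan : ∀ x : H, ∃ xp ∈ Hp, ∃ xm ∈ Hm, ∃ x0 ∈ LinearMap.ker (G : H →ₗ[ℂ] H), x = xp + xm + x0)
    (hinvp : ∀ x ∈ Hp, G x ∈ Hp) (hinvm : ∀ x ∈ Hm, G x ∈ Hm)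
    (hposp : ∃ α > 0, ∀ x ∈ Hp, α * ‖x‖ ^ 2 ≤ (⟪G x, x⟫_ℂ).re)
    (hnegm : ∃ β > 0, ∀ x ∈ Hm, (⟪G x, x⟫_ℂ).re ≤ -(β * ‖x‖ ^ 2))
    (hnormp : IsLUB {r : ℝ | ∃ x ∈ Hp, ‖x‖ = 1 ∧ r = ‖G x‖} (1 / κ))
    (hnormm : IsLUB {r : ℝ | ∃ x ∈ Hm, ‖x‖ = 1 ∧ r = ‖G x‖} (1 / κ)) :
    (∀ u₀ : H, ∃ γ ∈ Set.Icc (-κ) κ, ∃ y₀ : H,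
        ⟪G y₀, y₀⟫_ℂ = 0 ∧ ((1 : H →L[ℂ] H) + (γ : ℂ) • G) y₀ = u₀) ↔
      (LinearMap.ker (((1 : H →L[ℂ] H) - (κ : ℂ) • G : H →L[ℂ] H) : H →ₗ[ℂ] H) ≠ ⊥ ∧
        LinearMap.ker (((1 : H →L[ℂ] H) + (κ : ℂ) • G : H →L[ℂ] H) : H →ₗ[ℂ] H) ≠ ⊥) := by
  obtain ⟨α, hα, hposp'⟩ := hposp
  obtain ⟨β, hβ, hnegm'⟩ := hnegm
  have hsym : ∀ x y : H, ⟪G x, y⟫_ℂ = ⟪x, G y⟫_ℂ := fun x y =>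
    (ContinuousLinearMap.isSelfAdjoint_iff_isSymmetric.mp hG) x y
  have hreal : ∀ x : H, ⟪G x, x⟫_ℂ = ((⟪G x, x⟫_ℂ).re : ℂ) := by
    intro x
    have h : (starRingEnd ℂ) ⟪G x, x⟫_ℂ = ⟪G x, x⟫_ℂ := by
      rw [inner_conj_symm, hsym]
    rw [Complex.conj_eq_iff_re.mp h]
  -- norm bounds on the two subspaces
  have hub : ∀ (S : Submodule ℂ H), IsLUB {r : ℝ | ∃ x ∈ S, ‖x‖ = 1 ∧ r = ‖G x‖} (1/κ) →
      ∀ x ∈ S, ‖G x‖ ≤ ‖x‖ / κ := by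
    intro S hS x hx
    rcases eq_or_ne x 0 with rfl | hxne
    · simp [div_nonneg (norm_nonneg (0:H)) hκ.le]
    · have hxn : (0:ℝ) < ‖x‖ := norm_pos_iff.mpr hxne
      set z := ((‖x‖⁻¹ : ℝ) : ℂ) • x with hz
      have hzS : z ∈ S := S.smul_mem _ hx
      have hzn : ‖z‖ = 1 := by
        rw [hz, norm_smul, Complex.norm_real, Real.norm_eq_abs, abs_of_pos (by positivity)]
        field_simp
      have hmem : ‖G z‖ ∈ {r : ℝ | ∃ x ∈ S, ‖x‖ = 1 ∧ r = ‖G x‖} := ⟨z, hzS, hzn, rfl⟩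
      have h1 : ‖G z‖ ≤ 1/κ := hS.1 hmem
      have h2 : ‖G z‖ = ‖x‖⁻¹ * ‖G x‖ := by
        rw [hz, map_smul, norm_smul, Complex.norm_real, Real.norm_eq_abs,
          abs_of_pos (by positivity)]
      rw [h2] at h1
      have h3 : ‖G x‖ ≤ ‖x‖ * (1/κ) := by
        have h4 := mul_le_mul_of_nonneg_left h1 hxn.le
        rwa [← mul_assoc, mul_inv_cancel₀ hxn.ne', one_mul] at h4
      rwa [mul_one_div] at h3
  have hGp := hub Hp hnormp
  have hGm := hub Hm hnormm
  have hGnorm : ∀ x : H, ‖G x‖ ≤ ‖x‖ / κ := by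
    intro x
    obtain ⟨xp, hxp, xm, hxm, x0, hx0, hx⟩ := hspan x
    have hGx0 : G x0 = 0 := hx0
    have horth1 : ⟪G xp, G xm⟫_ℂ = 0 := hpm _ (hinvp _ hxp) _ (hinvm _ hxm)
    have hx2 : ‖x‖^2 = ‖xp‖^2 + ‖xm‖^2 + ‖x0‖^2 := by
      rw [hx]
      exact pythag3 (hpm _ hxp _ hxm) (hp0 _ hxp _ hx0) (hm0 _ hxm _ hx0)
    have hGx : G x = G xp + G xm := by rw [hx, map_add, map_add, hGx0, add_zero]
    have hGx2 : ‖G x‖^2 = ‖G xp‖^2 + ‖G xm‖^2 := by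
      rw [hGx, norm_add_sq (𝕜 := ℂ), horth1]
      simp
    have h1 : ‖G x‖^2 ≤ (‖x‖/κ)^2 := by
      rw [hGx2]
      have e1 := hGp _ hxp
      have e2 := hGm _ hxm
      have q1 : ‖G xp‖^2 ≤ (‖xp‖/κ)^2 := by nlinarith [norm_nonneg (G xp), norm_nonneg xp]
      have q2 : ‖G xm‖^2 ≤ (‖xm‖/κ)^2 := by nlinarith [norm_nonneg (G xm), norm_nonneg xm]
      have q3 : (‖xp‖/κ)^2 + (‖xm‖/κ)^2 ≤ (‖x‖/κ)^2 := by
        rw [div_pow, div_pow, div_pow, ← add_div, hx2]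
        exact (div_le_div_iff_of_pos_right (by positivity)).mpr (by nlinarith [sq_nonneg ‖x0‖])
      linarith
    have h2 := Real.sqrt_le_sqrt h1
    rwa [Real.sqrt_sq (norm_nonneg _), Real.sqrt_sq (by positivity)] at h2
  have hGop : ‖G‖ ≤ 1/κ := opnorm_le hκ hGnorm
  -- swapped package for -G
  have hkerneg : LinearMap.ker ((-G : H →L[ℂ] H) : H →ₗ[ℂ] H) = LinearMap.ker (G : H →ₗ[ℂ] H) := by
    ext x
    simp [LinearMap.mem_ker]
  have hmp : ∀ x ∈ Hm, ∀ y ∈ Hp, ⟪x, y⟫_ℂ = 0 := by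
    intro x hx y hy
    rw [← inner_conj_symm, hpm y hy x hx, map_zero]
  have hsymN : ∀ x y : H, ⟪(-G) x, y⟫_ℂ = ⟪x, (-G) y⟫_ℂ := by
    intro x y
    simp only [ContinuousLinearMap.neg_apply, inner_neg_left, inner_neg_right, hsym x y]
  have hm0' : ∀ x ∈ Hm, ∀ y ∈ LinearMap.ker ((-G : H →L[ℂ] H) : H →ₗ[ℂ] H), ⟪x, y⟫_ℂ = 0 := by
    rw [hkerneg]; exact hm0
  have hp0' : ∀ x ∈ Hp, ∀ y ∈ LinearMap.ker ((-G : H →L[ℂ] H) : H →ₗ[ℂ] H), ⟪x, y⟫_ℂ = 0 := by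
    rw [hkerneg]; exact hp0
  have hspan' : ∀ x : H, ∃ xm ∈ Hm, ∃ xp ∈ Hp, ∃ x0 ∈ LinearMap.ker ((-G : H →L[ℂ] H) : H →ₗ[ℂ] H), x = xm + xp + x0 := by
    intro z
    obtain ⟨zp, h1, zm, h2, z0, h3, h4⟩ := hspan z
    exact ⟨zm, h2, zp, h1, z0, by rw [hkerneg]; exact h3, by rw [h4]; abel⟩
  have hinvm' : ∀ x ∈ Hm, (-G) x ∈ Hm := fun z hz => by
    simpa [ContinuousLinearMap.neg_apply] using Hm.neg_mem (hinvm z hz)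
  have hinvp' : ∀ x ∈ Hp, (-G) x ∈ Hp := fun z hz => by
    simpa [ContinuousLinearMap.neg_apply] using Hp.neg_mem (hinvp z hz)
  have hposmN : ∀ x ∈ Hm, β * ‖x‖^2 ≤ (⟪(-G) x, x⟫_ℂ).re := fun z hz => by
    simp only [ContinuousLinearMap.neg_apply, inner_neg_left, Complex.neg_re]
    linarith [hnegm' z hz]
  have hnegpN : ∀ x ∈ Hp, (⟪(-G) x, x⟫_ℂ).re ≤ -(α * ‖x‖^2) := fun z hz => by
    simp only [ContinuousLinearMap.neg_apply, inner_neg_left, Complex.neg_re]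
    linarith [hposp' z hz]
  have hGnormN : ∀ x : H, ‖(-G) x‖ ≤ ‖x‖/κ := fun z => by
    rw [ContinuousLinearMap.neg_apply, norm_neg]; exact hGnorm z
  have hGmN : ∀ x ∈ Hp, ‖(-G) x‖ ≤ ‖x‖/κ := fun z hz => hGnormN z
  constructor
  · intro hsolv
    constructor
    · -- ker (1 - κ G) ≠ ⊥, from u₀ ∈ Hm
      obtain ⟨r, x, hxHm, hx1, hrx⟩ := lub_nonempty hnormm
      have hxne : x ≠ 0 := fun h => by rw [h, norm_zero] at hx1; exact zero_ne_one hx1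
      obtain ⟨γ, hγ, y₀, hQ, hsol⟩ := hsolv x
      have hsol' : y₀ + (γ:ℂ) • G y₀ = x := by
        simpa [ContinuousLinearMap.add_apply, ContinuousLinearMap.one_apply,
          ContinuousLinearMap.smul_apply] using hsol
      have hQ' : (⟪(-G) y₀, y₀⟫_ℂ).re = 0 := by
        simp [ContinuousLinearMap.neg_apply, inner_neg_left, hQ]
      have hsolN : y₀ + ((-γ : ℝ):ℂ) • (-G) y₀ = x := by
        rw [Complex.ofReal_neg, neg_smul, ContinuousLinearMap.neg_apply, smul_neg, neg_neg]
        exact hsol'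
      obtain ⟨v, hvne, hveq⟩ := forward_kernel (-G) hsymN κ hκ Hm Hp hmp hm0' hp0' hspan'
        hinvm' hinvp' hβ hposmN hα hnegpN hGmN x hxHm hxne
        (γ := -γ) ⟨by linarith [hγ.2], by linarith [hγ.1]⟩ hQ' hsolN
      rw [Submodule.ne_bot_iff]
      refine ⟨v, ?_, hvne⟩
      rw [LinearMap.mem_ker, ContinuousLinearMap.coe_coe]
      have h5 : ((1 : H →L[ℂ] H) - (κ:ℂ) • G) v = v + (κ:ℂ) • (-G) v := by
        simp only [ContinuousLinearMap.sub_apply, ContinuousLinearMap.one_apply,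
          ContinuousLinearMap.smul_apply, ContinuousLinearMap.neg_apply, smul_neg]
        abel
      rw [h5, hveq]
    · -- ker (1 + κ G) ≠ ⊥, from u₀ ∈ Hp
      obtain ⟨r, x, hxHp, hx1, hrx⟩ := lub_nonempty hnormp
      have hxne : x ≠ 0 := fun h => by rw [h, norm_zero] at hx1; exact zero_ne_one hx1
      obtain ⟨γ, hγ, y₀, hQ, hsol⟩ := hsolv x
      have hsol' : y₀ + (γ:ℂ) • G y₀ = x := by
        simpa [ContinuousLinearMap.add_apply, ContinuousLinearMap.one_apply,
          ContinuousLinearMap.smul_apply] using hsol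
      have hQ' : (⟪G y₀, y₀⟫_ℂ).re = 0 := by rw [hQ]; simp
      obtain ⟨v, hvne, hveq⟩ := forward_kernel G hsym κ hκ Hp Hm hpm hp0 hm0 hspan
        hinvp hinvm hα hposp' hβ hnegm' (fun z hz => hGnorm z) x hxHp hxne hγ hQ' hsol'
      rw [Submodule.ne_bot_iff]
      refine ⟨v, ?_, hvne⟩
      rw [LinearMap.mem_ker, ContinuousLinearMap.coe_coe]
      have h5 : ((1 : H →L[ℂ] H) + (κ:ℂ) • G) v = v + (κ:ℂ) • G v := by
        simp [ContinuousLinearMap.add_apply]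
      rw [h5, hveq]
  · rintro ⟨hk1, hk2⟩ u₀
    have hκc : (κ:ℂ) ≠ 0 := by exact_mod_cast hκ.ne'
    -- eigenvectors at the boundary
    obtain ⟨ep, hepmem, hepne⟩ := (Submodule.ne_bot_iff _).mp hk1
    obtain ⟨em, hemmem, hemne⟩ := (Submodule.ne_bot_iff _).mp hk2
    have hepeq : ep = (κ:ℂ) • G ep := by
      have h1 := LinearMap.mem_ker.mp hepmem
      simp only [ContinuousLinearMap.coe_coe, ContinuousLinearMap.sub_apply, ContinuousLinearMap.one_apply,
        ContinuousLinearMap.smul_apply] at h1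
      rwa [sub_eq_zero] at h1
    have heGp : G ep = (κ:ℂ)⁻¹ • ep := by
      conv_rhs => rw [hepeq]
      rw [smul_smul, inv_mul_cancel₀ hκc, one_smul]
    have hemeq : em + (κ:ℂ) • G em = 0 := by
      have h1 := LinearMap.mem_ker.mp hemmem
      simpa [ContinuousLinearMap.add_apply, ContinuousLinearMap.one_apply,
        ContinuousLinearMap.smul_apply] using h1
    have heGm : G em = (-(κ:ℂ)⁻¹) • em := by
      have h1 : (κ:ℂ) • G em = -em := by
        rw [← neg_eq_of_add_eq_zero_right hemeq]
      have h2 := congrArg (fun z => (κ:ℂ)⁻¹ • z) h1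
      simp only [smul_smul, inv_mul_cancel₀ hκc, one_smul, smul_neg] at h2
      rw [h2, neg_smul]
    have heGpN : (-G) ep = (-(κ:ℂ)⁻¹) • ep := by
      rw [ContinuousLinearMap.neg_apply, heGp, neg_smul]
    -- the function f
    set f : ℝ → ℝ := fun γ => (⟪G (resolv G u₀ γ), resolv G u₀ γ⟫_ℂ).re with hfdef
    have hcont2 : Continuous fun y : H => (⟪G y, y⟫_ℂ).re :=
      Complex.continuous_re.comp (Continuous.inner G.continuous continuous_id)
    have hfc : ∀ γ ∈ Set.Ioo (-κ) κ, ContinuousAt f γ := by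
      intro γ hγ
      have habs : |γ| < κ := abs_lt.mpr ⟨hγ.1, hγ.2⟩
      exact hcont2.continuousAt.comp (resolv_contAt hκ hGop u₀ habs)
    by_cases hz : ∃ γ ∈ Set.Ioo (-κ) κ, f γ = 0
    · obtain ⟨γ, hγ, hfγ⟩ := hz
      have habs : |γ| < κ := abs_lt.mpr ⟨hγ.1, hγ.2⟩
      refine ⟨γ, ⟨hγ.1.le, hγ.2.le⟩, resolv G u₀ γ, ?_, ?_⟩
      · rw [hreal]
        simp only [hfdef] at hfγ
        rw [hfγ]
        simp
      · have h1 := resolv_sol hκ hGop u₀ habs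
        simpa [ContinuousLinearMap.add_apply, ContinuousLinearMap.one_apply,
          ContinuousLinearMap.smul_apply] using h1
    · push_neg at hz
      have h0mem : (0:ℝ) ∈ Set.Ioo (-κ) κ := ⟨neg_lt_zero.mpr hκ, hκ⟩
      have hnz : ∀ a b : ℝ, a ∈ Set.Ioo (-κ) κ → b ∈ Set.Ioo (-κ) κ →
          f a < 0 → 0 < f b → False := by
        intro a b ha hb hfa hfb
        have hsub : Set.uIcc a b ⊆ Set.Ioo (-κ) κ :=
          Set.OrdConnected.uIcc_subset Set.ordConnected_Ioo ha hb
        have hcont : ContinuousOn f (Set.uIcc a b) := fun x hx =>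
          (hfc x (hsub hx)).continuousWithinAt
        have h0 : (0:ℝ) ∈ Set.uIcc (f a) (f b) := by
          rw [Set.mem_uIcc]
          exact Or.inl ⟨hfa.le, hfb.le⟩
        obtain ⟨c, hc, hfc0⟩ := intermediate_value_uIcc hcont h0
        exact hz c (hsub hc) hfc0
      rcases lt_trichotomy (f 0) 0 with h00 | h00 | h00
      · -- use boundary at -κ with -G and ep
        have hneg : ∀ γ ∈ Set.Ioo (-κ) (0:ℝ), f γ < 0 := by
          intro γ hγ
          have hγm : γ ∈ Set.Ioo (-κ) κ := ⟨hγ.1, lt_trans hγ.2 hκ⟩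
          rcases lt_or_gt_of_ne (hz γ hγm) with h | h
          · exact h
          · exact (hnz 0 γ h0mem hγm h00 h).elim
        have hfneg : ∀ γ ∈ Set.Ioo (0:ℝ) κ, ∀ y : H, y + (γ:ℂ) • (-G) y = u₀ →
            0 < (⟪(-G) y, y⟫_ℂ).re := by
          intro γ hγ y hy
          have hy' : y + ((-γ : ℝ):ℂ) • G y = u₀ := by
            rw [Complex.ofReal_neg, neg_smul]
            rw [ContinuousLinearMap.neg_apply, smul_neg] at hy
            exact hy
          have habs : |(-γ)| < κ := by rw [abs_neg, abs_of_pos hγ.1]; exact hγ.2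
          have hyr := resolv_uniq hκ hGop habs hy'
          have h2 := hneg (-γ) ⟨by linarith [hγ.2], by linarith [hγ.1]⟩
          simp only [hfdef, ← hyr] at h2
          simp only [ContinuousLinearMap.neg_apply, inner_neg_left, Complex.neg_re]
          linarith
        obtain ⟨y, hy1, hy2⟩ := boundary (-G) hsymN κ hκ Hm Hp hmp hm0' hp0' hspan'
          hinvm' hinvp' hβ hposmN hα hnegpN hGnormN ep heGpN hepne u₀ hfneg
        refine ⟨-κ, ⟨le_refl _, by linarith⟩, y, ?_, ?_⟩
        · have h1 : -⟪G y, y⟫_ℂ = 0 := by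
            simpa [ContinuousLinearMap.neg_apply, inner_neg_left] using hy1
          exact neg_eq_zero.mp h1
        · have h1 : y + ((-κ : ℝ):ℂ) • G y = u₀ := by
            rw [Complex.ofReal_neg, neg_smul]
            rw [ContinuousLinearMap.neg_apply] at hy2
            rw [smul_neg] at hy2
            exact hy2
          simpa [ContinuousLinearMap.add_apply, ContinuousLinearMap.one_apply,
            ContinuousLinearMap.smul_apply] using h1
      · exact (hz 0 h0mem h00).elim
      · -- use boundary at κ with G and em
        have hpos : ∀ γ ∈ Set.Ioo (0:ℝ) κ, 0 < f γ := by
          intro γ hγ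
          have hγm : γ ∈ Set.Ioo (-κ) κ := ⟨by linarith [hγ.1], hγ.2⟩
          rcases lt_or_gt_of_ne (hz γ hγm) with h | h
          · exact (hnz γ 0 hγm h0mem h h00).elim
          · exact h
        have hfpos : ∀ γ ∈ Set.Ioo (0:ℝ) κ, ∀ y : H, y + (γ:ℂ) • G y = u₀ →
            0 < (⟪G y, y⟫_ℂ).re := by
          intro γ hγ y hy
          have habs : |γ| < κ := by rw [abs_of_pos hγ.1]; exact hγ.2
          have hyr := resolv_uniq hκ hGop habs hy
          have h2 := hpos γ hγ
          simp only [hfdef, ← hyr] at h2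
          exact h2
        obtain ⟨y, hy1, hy2⟩ := boundary G hsym κ hκ Hp Hm hpm hp0 hm0 hspan
          hinvp hinvm hα hposp' hβ hnegm' hGnorm em heGm hemne u₀ hfpos
        refine ⟨κ, ⟨by linarith, le_refl _⟩, y, hy1, ?_⟩
        simpa [ContinuousLinearMap.add_apply, ContinuousLinearMap.one_apply,
          ContinuousLinearMap.smul_apply] using hy2
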